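/- The matrix y is a normal element of the standard hereditary order: y^e equals the scalar matrix t·Id, and the left coset y·Δ = {y·M : M ∈ Δ} coincides with the right coset Δ·y = {M·y : M ∈ Δ}, and both are equal to the set J of e×e matrices M over K such that M i j lies in the image of R in K when i < j and lies in t·R when j ≤ i (for all indices 0 ≤ i, j ≤ e−1). -/

import Mathlib

/-- The standard hereditary order of ramification index `e` over a DVR `R` with
uniformizer `t`, inside the `e × e` matrices over the fraction field `K`:
matrices whose `(i,j)` entry lies in `t·R` when `j < i` and in (the image of) `R`
otherwise. -/
def stdHereditaryOrder (R K : Type*) [CommRing R] [Field K] [Algebra R K]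
    (t : R) (e : ℕ) : Set (Matrix (Fin e) (Fin e) K) :=
  {M | ∀ i j : Fin e,
    if (j : ℕ) < (i : ℕ) then ∃ r : R, algebraMap R K (t * r) = M i j
    else ∃ r : R, algebraMap R K r = M i j}

/-- The matrix `y`: `y i j = 1` if `j = i + 1`, `y i j = t` if `(i,j) = (e-1, 0)`,
and `0` otherwise. -/
def yMat (R K : Type*) [CommRing R] [Field K] [Algebra R K] (t : R) (e : ℕ) :
    Matrix (Fin e) (Fin e) K :=
  Matrix.of fun i j =>
    if (j : ℕ) = (i : ℕ) + 1 then 1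
    else if (i : ℕ) = e - 1 ∧ (j : ℕ) = 0 then algebraMap R K t
    else 0

section Aux

variable (R K : Type*) [CommRing R] [Field K] [Algebra R K] (t : R) (e : ℕ)

lemma yMat_mul_apply (M : Matrix (Fin e) (Fin e) K) (i j : Fin e) :
    (yMat R K t e * M) i j =
      if h : (i : ℕ) + 1 < e then M ⟨(i : ℕ) + 1, h⟩ j
      else algebraMap R K t * M ⟨0, i.pos⟩ j := by
  rw [Matrix.mul_apply]
  have hi := i.isLt
  split_ifs with h
  · rw [Finset.sum_eq_single (⟨(i : ℕ) + 1, h⟩ : Fin e)]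
    · have : yMat R K t e i ⟨(i : ℕ) + 1, h⟩ = 1 := by
        simp only [yMat, Matrix.of_apply, Fin.val_mk, eq_self_iff_true, and_true, true_and, if_true]
        all_goals (split_ifs <;> first | rfl | omega | exact ‹False›.elim)
      rw [this, one_mul]
    · intro b _ hb
      have hb' : (b : ℕ) ≠ (i : ℕ) + 1 := fun hc => hb (Fin.ext hc)
      have : yMat R K t e i b = 0 := by
        simp only [yMat, Matrix.of_apply, Fin.val_mk, eq_self_iff_true, and_true, true_and, if_true]
        all_goals (split_ifs <;> first | rfl | omega | exact ‹False›.elim)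
      rw [this, zero_mul]
    · intro hmem; exact absurd (Finset.mem_univ _) hmem
  · rw [Finset.sum_eq_single (⟨0, i.pos⟩ : Fin e)]
    · have : yMat R K t e i ⟨0, i.pos⟩ = algebraMap R K t := by
        simp only [yMat, Matrix.of_apply, Fin.val_mk, eq_self_iff_true, and_true, true_and, if_true]
        all_goals (split_ifs <;> first | rfl | omega | exact ‹False›.elim)
      rw [this]
    · intro b _ hb
      have hb' : (b : ℕ) ≠ 0 := fun hc => hb (Fin.ext hc)
      have hbe := b.isLt
      have : yMat R K t e i b = 0 := by
        simp only [yMat, Matrix.of_apply, Fin.val_mk, eq_self_iff_true, and_true, true_and, if_true]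
        all_goals (split_ifs <;> first | rfl | omega | exact ‹False›.elim)
      rw [this, zero_mul]
    · intro hmem; exact absurd (Finset.mem_univ _) hmem

lemma mul_yMat_apply (M : Matrix (Fin e) (Fin e) K) (i j : Fin e) :
    (M * yMat R K t e) i j =
      if h : 0 < (j : ℕ) then M i ⟨(j : ℕ) - 1, by omega⟩
      else M i ⟨e - 1, by have := j.pos; omega⟩ * algebraMap R K t := by
  rw [Matrix.mul_apply]
  have hj := j.isLt
  split_ifs with h
  · rw [Finset.sum_eq_single (⟨(j : ℕ) - 1, by omega⟩ : Fin e)]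
    · have : yMat R K t e ⟨(j : ℕ) - 1, by omega⟩ j = 1 := by
        simp only [yMat, Matrix.of_apply, Fin.val_mk, eq_self_iff_true, and_true, true_and, if_true]
        all_goals (split_ifs <;> first | rfl | omega | exact ‹False›.elim)
      rw [this, mul_one]
    · intro b _ hb
      have hb' : (b : ℕ) ≠ (j : ℕ) - 1 := fun hc => hb (Fin.ext hc)
      have hbe := b.isLt
      have : yMat R K t e b j = 0 := by
        simp only [yMat, Matrix.of_apply, Fin.val_mk, eq_self_iff_true, and_true, true_and, if_true]
        all_goals (split_ifs <;> first | rfl | omega | exact ‹False›.elim)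
      rw [this, mul_zero]
    · intro hmem; exact absurd (Finset.mem_univ _) hmem
  · rw [Finset.sum_eq_single (⟨e - 1, by have := j.pos; omega⟩ : Fin e)]
    · have : yMat R K t e ⟨e - 1, by have := j.pos; omega⟩ j = algebraMap R K t := by
        have he := j.pos
        simp only [yMat, Matrix.of_apply, Fin.val_mk, eq_self_iff_true, and_true, true_and, if_true]
        all_goals (split_ifs <;> first | rfl | omega | exact ‹False›.elim)
      rw [this]
    · intro b _ hb
      have hb' : (b : ℕ) ≠ e - 1 := fun hc => hb (Fin.ext hc)
      have hbe := b.isLt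
      have : yMat R K t e b j = 0 := by
        simp only [yMat, Matrix.of_apply, Fin.val_mk, eq_self_iff_true, and_true, true_and, if_true]
        all_goals (split_ifs <;> first | rfl | omega | exact ‹False›.elim)
      rw [this, mul_zero]
    · intro hmem; exact absurd (Finset.mem_univ _) hmem

lemma yMat_pow_apply : ∀ k : ℕ, 1 ≤ k → k ≤ e →
    (yMat R K t e) ^ k = Matrix.of (fun i j : Fin e =>
      if (j : ℕ) = (i : ℕ) + k then 1
      else if (j : ℕ) + e = (i : ℕ) + k then algebraMap R K t else 0) := by
  intro k
  induction k with
  | zero => omega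
  | succ n ih =>
    intro _ h2
    rcases Nat.eq_zero_or_pos n with hn | hn
    · subst hn
      ext i j
      have hi := i.isLt; have hj := j.isLt
      simp only [pow_one, yMat, Matrix.of_apply, Fin.val_mk, eq_self_iff_true, and_true,
        true_and, if_true, zero_add, add_zero, Nat.zero_add]
      all_goals (split_ifs <;> first | rfl | omega | exact ‹False›.elim)
    · rw [pow_succ', ih hn (by omega)]
      ext i j
      have hi := i.isLt; have hj := j.isLt
      rw [yMat_mul_apply]
      split_ifs with h
      · simp only [Matrix.of_apply, Fin.val_mk]
        all_goals (split_ifs <;> first | rfl | omega | exact ‹False›.elim)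
      · simp only [Matrix.of_apply, Fin.val_mk]
        all_goals (split_ifs <;> first | rfl | ring1 | omega | exact ‹False›.elim)

end Aux

/-- `y` is a normal element of the standard hereditary order: `y ^ e = t · Id`,
`y·Δ = Δ·y`, and both equal the set `J` of matrices with `(i,j)` entry in `R`
for `i < j` and in `t·R` for `j ≤ i`. -/
theorem yMat_normal_element (R K : Type*) [CommRing R] [IsDomain R]
    [IsDiscreteValuationRing R] [Field K] [Algebra R K] [IsFractionRing R K]
    (t : R) (ht : Ideal.span {t} = IsLocalRing.maximalIdeal R)
    (e : ℕ) (he : 1 ≤ e) :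
    (yMat R K t e) ^ e = Matrix.scalar (Fin e) (algebraMap R K t) ∧
    (fun M => yMat R K t e * M) '' stdHereditaryOrder R K t e
      = (fun M => M * yMat R K t e) '' stdHereditaryOrder R K t e ∧
    (fun M => yMat R K t e * M) '' stdHereditaryOrder R K t e
      = {M : Matrix (Fin e) (Fin e) K | ∀ i j : Fin e,
          if (i : ℕ) < (j : ℕ) then ∃ r : R, algebraMap R K r = M i j
          else ∃ r : R, algebraMap R K (t * r) = M i j} := by
  set J : Set (Matrix (Fin e) (Fin e) K) :=
    {M : Matrix (Fin e) (Fin e) K | ∀ i j : Fin e,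
        if (i : ℕ) < (j : ℕ) then ∃ r : R, algebraMap R K r = M i j
        else ∃ r : R, algebraMap R K (t * r) = M i j} with hJ
  have hpow : (yMat R K t e) ^ e = Matrix.scalar (Fin e) (algebraMap R K t) := by
    rw [yMat_pow_apply R K t e e he le_rfl, Matrix.scalar_apply]
    ext i j
    have hi := i.isLt; have hj := j.isLt
    simp only [Matrix.of_apply, Matrix.diagonal_apply]
    rcases eq_or_ne i j with h | h
    · subst h
      rw [if_neg (by omega), if_pos (by omega), if_pos rfl]
    · have : (j : ℕ) ≠ (i : ℕ) := fun hc => h (Fin.ext hc.symm)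
      rw [if_neg (by omega), if_neg (by omega), if_neg h]
  have hleft : (fun M => yMat R K t e * M) '' stdHereditaryOrder R K t e = J := by
    apply Set.Subset.antisymm
    · rintro _ ⟨M, hM, rfl⟩
      intro i j
      have hi := i.isLt; have hj := j.isLt
      dsimp only
      rw [yMat_mul_apply]
      rcases Nat.lt_or_ge ((i : ℕ) + 1) e with h' | h'
      · rw [dif_pos h']
        have hM' := hM ⟨(i : ℕ) + 1, h'⟩ j
        split_ifs with h
        · rwa [if_neg (by simp only [Fin.val_mk]; omega)] at hM'
        · rwa [if_pos (by simp only [Fin.val_mk]; omega)] at hM'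
      · rw [dif_neg (by omega), if_neg (by omega)]
        have hM' := hM ⟨0, i.pos⟩ j
        rw [if_neg (by simp only [Fin.val_mk]; omega)] at hM'
        obtain ⟨r, hr⟩ := hM'
        exact ⟨r, by rw [map_mul, hr]⟩
    · intro N hN
      have hrow : ∀ j : Fin e, ∃ r : R,
          algebraMap R K (t * r) = N ⟨e - 1, by have := j.pos; omega⟩ j := by
        intro j
        have hj := j.isLt
        have := hN ⟨e - 1, by omega⟩ j
        rwa [if_neg (by simp only [Fin.val_mk]; omega)] at this
      choose r0 hr0 using hrow
      refine ⟨Matrix.of (fun i j : Fin e =>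
        if h : 0 < (i : ℕ) then N ⟨(i : ℕ) - 1, by have := i.isLt; omega⟩ j
        else algebraMap R K (r0 j)), ?_, ?_⟩
      · intro i j
        have hi := i.isLt; have hj := j.isLt
        simp only [Matrix.of_apply]
        rcases Nat.eq_zero_or_pos (i : ℕ) with h0 | h0
        · rw [if_neg (by omega), dif_neg (by omega)]
          exact ⟨r0 j, rfl⟩
        · rw [dif_pos h0]
          have hN' := hN ⟨(i : ℕ) - 1, by omega⟩ j
          split_ifs with h
          · rwa [if_neg (by simp only [Fin.val_mk]; omega)] at hN'
          · rwa [if_pos (by simp only [Fin.val_mk]; omega)] at hN'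
      · ext i j
        have hi := i.isLt; have hj := j.isLt
        dsimp only
        rw [yMat_mul_apply]
        split_ifs with h
        · simp only [Matrix.of_apply, Fin.val_mk]
          rw [dif_pos (by omega)]
          congr 1 <;> exact Fin.ext (by simp only [Fin.val_mk]; omega)
        · simp only [Matrix.of_apply, Fin.val_mk]
          rw [dif_neg (by omega), ← map_mul]
          have hieq : i = ⟨e - 1, by omega⟩ := Fin.ext (by simp only [Fin.val_mk]; omega)
          rw [hieq]
          exact hr0 j
  have hright : (fun M => M * yMat R K t e) '' stdHereditaryOrder R K t e = J := by
    apply Set.Subset.antisymm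
    · rintro _ ⟨M, hM, rfl⟩
      intro i j
      have hi := i.isLt; have hj := j.isLt
      dsimp only
      rw [mul_yMat_apply]
      rcases Nat.eq_zero_or_pos (j : ℕ) with h' | h'
      · rw [dif_neg (by omega), if_neg (by omega)]
        have hM' := hM i ⟨e - 1, by omega⟩
        rw [if_neg (by simp only [Fin.val_mk]; omega)] at hM'
        obtain ⟨r, hr⟩ := hM'
        exact ⟨r, by rw [mul_comm t r, map_mul, hr]⟩
      · rw [dif_pos h']
        have hM' := hM i ⟨(j : ℕ) - 1, by omega⟩
        split_ifs with h
        · rwa [if_neg (by simp only [Fin.val_mk]; omega)] at hM'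
        · rwa [if_pos (by simp only [Fin.val_mk]; omega)] at hM'
    · intro N hN
      have hcol : ∀ i : Fin e, ∃ r : R,
          algebraMap R K (t * r) = N i ⟨0, i.pos⟩ := by
        intro i
        have := hN i ⟨0, i.pos⟩
        rwa [if_neg (by simp only [Fin.val_mk]; omega)] at this
      choose r0 hr0 using hcol
      refine ⟨Matrix.of (fun i j : Fin e =>
        if h : (j : ℕ) + 1 < e then N i ⟨(j : ℕ) + 1, h⟩
        else algebraMap R K (r0 i)), ?_, ?_⟩
      · intro i j
        have hi := i.isLt; have hj := j.isLt
        simp only [Matrix.of_apply]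
        rcases lt_or_ge ((j : ℕ) + 1) e with h0 | h0
        · rw [dif_pos h0]
          have hN' := hN i ⟨(j : ℕ) + 1, h0⟩
          split_ifs with h
          · rwa [if_neg (by simp only [Fin.val_mk]; omega)] at hN'
          · rwa [if_pos (by simp only [Fin.val_mk]; omega)] at hN'
        · rw [if_neg (by omega), dif_neg (by omega)]
          exact ⟨r0 i, rfl⟩
      · ext i j
        have hi := i.isLt; have hj := j.isLt
        dsimp only
        rw [mul_yMat_apply]
        split_ifs with h
        · simp only [Matrix.of_apply, Fin.val_mk]
          rw [dif_pos (by omega)]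
          congr 1 <;> exact Fin.ext (by simp only [Fin.val_mk]; omega)
        · simp only [Matrix.of_apply, Fin.val_mk]
          rw [dif_neg (by omega), mul_comm, ← map_mul]
          have hjeq : j = ⟨0, by omega⟩ := Fin.ext (by simp only [Fin.val_mk]; omega)
          rw [hjeq]
          exact hr0 i
  exact ⟨hpow, hleft.trans hright.symm, hleft⟩
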